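/- (Subproblem equivalence: R₀ is an N-agent Bayes risk.) In the (N+1)-agent sequential model with the L-out-of-(N+1) fusion rule, fix a sequential strategy τ whose first threshold is τ₁, and assume P(Ĥ₁=0) = p₀(1−a(τ₁)) + p₁·b(τ₁) > 0. Let q⁰ = p₀(1−a(τ₁))/(p₀(1−a(τ₁)) + p₁ b(τ₁)) = P(H=0 | Ĥ₁=0). Then c₁₀·q⁰·P(Σ_{n=2}^{N+1} Ĥₙ ≥ L | H=0, Ĥ₁=0) + c₀₁·(1−q⁰)·P(Σ_{n=2}^{N+1} Ĥₙ ≤ L−1 | H=1, Ĥ₁=0) equals the Bayes risk, in the N-agent sequential model with prior probability q⁰ of H=0, costs c₁₀, c₀₁, and the L-out-of-N fusion rule, of the N-agent sequential strategy σ defined by σᵢ(u₁,…,u_{i−1}) = τ_{i+1}(0, u₁,…,u_{i−1}). -/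

import Mathlib

open MeasureTheory

noncomputable section

/-- Auxiliary recursion computing the first `k` sequential decisions.
`decAux τ y k hk j` is the decision of agent `j+1` (0-indexed `j`), defined
recursively: agent `j` decides `1` iff its private signal `y j` exceeds the
threshold `τ j` evaluated at the decisions of agents `0, …, j−1`. -/
def decAux {n : ℕ} (τ : (i : Fin n) → (Fin i.1 → Bool) → ℝ) (y : Fin n → ℝ) :
    (k : ℕ) → k ≤ n → Fin k → Bool
  | 0, _ => Fin.elim0
  | k + 1, h =>
    fun i =>
      if hik : i.1 < k then decAux τ y k (Nat.le_of_succ_le h) ⟨i.1, hik⟩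
      else decide (τ ⟨k, h⟩ (decAux τ y k (Nat.le_of_succ_le h)) < y ⟨k, h⟩)

/-- The local decision `Ĥᵢ` of agent `i` under the sequential strategy `τ` at
signal realization `y`:  `Ĥᵢ = 1{yᵢ > τᵢ(Ĥ₁, …, Ĥ_{i−1})}`. -/
def decs {n : ℕ} (τ : (i : Fin n) → (Fin i.1 → Bool) → ℝ) (y : Fin n → ℝ) (i : Fin n) : Bool :=
  decAux τ y n le_rfl i

/-- Total number of `1` votes `Σᵢ Ĥᵢ` under the sequential strategy `τ`. -/
def ones {n : ℕ} (τ : (i : Fin n) → (Fin i.1 → Bool) → ℝ) (y : Fin n → ℝ) : ℕ :=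
  (Finset.univ.filter fun i => decs τ y i = true).card

/-- Bayes risk of the sequential strategy `τ` for `n` agents with prior
`P(H=0) = q`, costs `c10, c01` and the `K`-out-of-`n` fusion rule; conditionally
on `H = h` the signals are i.i.d. `μh`, modeled by the product measure on
`Fin n → ℝ`. -/
def seqRisk (n : ℕ) (q c10 c01 : ℝ) (μ0 μ1 : Measure ℝ)
    [SigmaFinite μ0] [SigmaFinite μ1] (K : ℕ)
    (τ : (i : Fin n) → (Fin i.1 → Bool) → ℝ) : ℝ :=
  c10 * q * ((Measure.pi fun _ : Fin n => μ0) {y | K ≤ ones τ y}).toReal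
    + c01 * (1 - q) * ((Measure.pi fun _ : Fin n => μ1) {y | ¬ K ≤ ones τ y}).toReal

/-- The parallel strategy with thresholds `lam`: each agent ignores the
precedent decisions. -/
def constStrat {n : ℕ} (lam : Fin n → ℝ) : (i : Fin n) → (Fin i.1 → Bool) → ℝ :=
  fun i _ => lam i

/-- Bayes risk of the parallel strategy with thresholds `lam`. -/
def parRisk (n : ℕ) (q c10 c01 : ℝ) (μ0 μ1 : Measure ℝ)
    [SigmaFinite μ0] [SigmaFinite μ1] (K : ℕ) (lam : Fin n → ℝ) : ℝ :=
  seqRisk n q c10 c01 μ0 μ1 K (constStrat lam)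


/-- Conditional probability `P(S | T) = ν(S ∩ T)/ν(T)` (with the junk value `0`
when `ν T = 0`). -/
def condProb {α : Type*} [MeasurableSpace α] (ν : Measure α) (S T : Set α) : ℝ :=
  (ν (S ∩ T)).toReal / (ν T).toReal

/-- Number of `1` votes `Σ_{n=2}^{N+1} Ĥₙ` among agents `2, …, N+1` (all agents
except the first) under the sequential strategy `τ`. -/
def onesTail {N : ℕ} (τ : (i : Fin (N + 1)) → (Fin i.1 → Bool) → ℝ)
    (y : Fin (N + 1) → ℝ) : ℕ :=
  ((Finset.univ.erase (⟨0, Nat.succ_pos N⟩ : Fin (N + 1))).filter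
    fun i => decs τ y i = true).card


lemma measurableSet_decAux {n : ℕ} (τ : (i : Fin n) → (Fin i.1 → Bool) → ℝ) :
    ∀ (k : ℕ) (hk : k ≤ n) (i : Fin k) (b : Bool),
      MeasurableSet {y : Fin n → ℝ | decAux τ y k hk i = b} := by
  intro k
  induction k with
  | zero => intro hk i; exact i.elim0
  | succ k ih =>
    intro hk i b
    by_cases hik : i.1 < k
    · have : {y : Fin n → ℝ | decAux τ y (k+1) hk i = b}
          = {y | decAux τ y k (Nat.le_of_succ_le hk) ⟨i.1, hik⟩ = b} := by
        ext y; simp [decAux, hik]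
      rw [this]; exact ih _ _ _
    · have : {y : Fin n → ℝ | decAux τ y (k+1) hk i = b}
          = ⋃ v : Fin k → Bool,
            ((⋂ j, {y | decAux τ y k (Nat.le_of_succ_le hk) j = v j})
              ∩ {y | decide (τ ⟨k, hk⟩ v < y ⟨k, hk⟩) = b}) := by
        ext y
        simp only [Set.mem_setOf_eq, Set.mem_iUnion, Set.mem_inter_iff, Set.mem_iInter]
        constructor
        · intro h
          refine ⟨decAux τ y k (Nat.le_of_succ_le hk), fun j => rfl, ?_⟩
          rw [← h]; simp [decAux, hik]
        · rintro ⟨v, hv, h⟩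
          have hveq : decAux τ y k (Nat.le_of_succ_le hk) = v := funext hv
          rw [← h]; simp [decAux, hik, hveq]
      rw [this]
      refine MeasurableSet.iUnion fun v => MeasurableSet.inter
        (MeasurableSet.iInter fun j => ih _ _ _) ?_
      have : {y : Fin n → ℝ | decide (τ ⟨k, hk⟩ v < y ⟨k, hk⟩) = b}
          = (fun y : Fin n → ℝ => y ⟨k, hk⟩) ⁻¹' {x : ℝ | decide (τ ⟨k, hk⟩ v < x) = b} := rfl
      rw [this]
      refine measurable_pi_apply _ ?_
      cases b
      · have : {x : ℝ | decide (τ ⟨k, hk⟩ v < x) = false} = Set.Iic (τ ⟨k, hk⟩ v) := by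
          ext x; simp [not_lt]
        rw [this]; exact measurableSet_Iic
      · have : {x : ℝ | decide (τ ⟨k, hk⟩ v < x) = true} = Set.Ioi (τ ⟨k, hk⟩ v) := by
          ext x; simp
        rw [this]; exact measurableSet_Ioi

lemma measurable_ones {n : ℕ} (τ : (i : Fin n) → (Fin i.1 → Bool) → ℝ) :
    Measurable (ones τ) := by
  have : ones τ = fun y => ∑ i : Fin n, if decs τ y i = true then 1 else 0 := by
    funext y; exact Finset.card_filter _ _
  rw [this]
  exact Finset.measurable_sum _ fun i _ =>
    Measurable.ite (measurableSet_decAux τ n le_rfl i true) measurable_const measurable_const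

lemma decAux_succ_eq {n : ℕ} (τ : (i : Fin n) → (Fin i.1 → Bool) → ℝ) (y : Fin n → ℝ)
    {k : ℕ} (h : k + 1 ≤ n) (i : Fin (k + 1)) :
    decAux τ y (k + 1) h i
      = if hik : i.1 < k then decAux τ y k (Nat.le_of_succ_le h) ⟨i.1, hik⟩
        else decide (τ ⟨k, h⟩ (decAux τ y k (Nat.le_of_succ_le h)) < y ⟨k, h⟩) := rfl

lemma decAux_cons {N : ℕ} (τ : (i : Fin (N + 1)) → (Fin i.1 → Bool) → ℝ)
    (σ : (i : Fin N) → (Fin i.1 → Bool) → ℝ)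
    (hσ : ∀ (i : Fin N) (u : Fin i.1 → Bool), σ i u = τ i.succ (Fin.cons false u))
    (y : Fin (N + 1) → ℝ)
    (hy : ¬ τ ⟨0, Nat.succ_pos N⟩ Fin.elim0 < y ⟨0, Nat.succ_pos N⟩) :
    ∀ (k : ℕ) (hk : k ≤ N),
      decAux τ y (k + 1) (Nat.succ_le_succ hk)
        = Fin.cons false (decAux σ (fun j => y j.succ) k hk) := by
  intro k
  induction k with
  | zero =>
    intro hk
    funext i
    have hi : i = ⟨0, Nat.lt_succ_self 0⟩ := by
      rcases i with ⟨iv, hiv⟩; congr 1; omega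
    subst hi
    rw [decAux_succ_eq, dif_neg (by omega)]
    have h1 : τ ⟨0, Nat.succ_le_succ hk⟩ (decAux τ y 0 (Nat.zero_le _))
        = τ ⟨0, Nat.succ_pos N⟩ Fin.elim0 := by
      exact congrArg _ (Subsingleton.elim _ _)
    rw [h1]
    simpa using decide_eq_false hy
  | succ k ih =>
    intro hk
    have hk' : k ≤ N := Nat.le_of_succ_le hk
    funext i
    rcases i with ⟨iv, hiv⟩
    cases iv with
    | zero =>
      rw [decAux_succ_eq, dif_pos (Nat.succ_pos k), ih hk']
      rfl
    | succ j =>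
      by_cases hjk : j < k
      · rw [decAux_succ_eq, dif_pos (Nat.succ_lt_succ hjk), ih hk']
        have h1 : (Fin.cons false (decAux σ (fun j => y j.succ) k hk') :
            Fin (k+1) → Bool) ⟨j + 1, Nat.succ_lt_succ hjk⟩
            = decAux σ (fun j => y j.succ) k hk' ⟨j, hjk⟩ := rfl
        have h2 : (Fin.cons false (decAux σ (fun j => y j.succ) (k+1) hk) :
            Fin (k+2) → Bool) ⟨j + 1, hiv⟩
            = decAux σ (fun j => y j.succ) (k+1) hk ⟨j, Nat.lt_of_succ_lt_succ hiv⟩ := rfl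
        rw [h1, h2, decAux_succ_eq, dif_pos hjk]
      · have hj : j = k := by omega
        subst hj
        rw [decAux_succ_eq, dif_neg (Nat.lt_irrefl (j+1)), ih hk']
        have hR : (Fin.cons false (decAux σ (fun j => y j.succ) (j+1) hk) :
            Fin (j+2) → Bool) ⟨j + 1, hiv⟩
            = decAux σ (fun j => y j.succ) (j+1) hk ⟨j, Nat.lt_succ_self j⟩ := rfl
        rw [hR, decAux_succ_eq, dif_neg (Nat.lt_irrefl j), hσ ⟨j, hk⟩]
        rfl

lemma decs_cons {N : ℕ} (τ : (i : Fin (N + 1)) → (Fin i.1 → Bool) → ℝ)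
    (σ : (i : Fin N) → (Fin i.1 → Bool) → ℝ)
    (hσ : ∀ (i : Fin N) (u : Fin i.1 → Bool), σ i u = τ i.succ (Fin.cons false u))
    (y : Fin (N + 1) → ℝ)
    (hy : ¬ τ ⟨0, Nat.succ_pos N⟩ Fin.elim0 < y ⟨0, Nat.succ_pos N⟩) :
    decs τ y = Fin.cons false (decs σ (fun j => y j.succ)) := by
  have := decAux_cons τ σ hσ y hy N le_rfl
  exact this

lemma onesTail_eq {N : ℕ} (τ : (i : Fin (N + 1)) → (Fin i.1 → Bool) → ℝ)
    (σ : (i : Fin N) → (Fin i.1 → Bool) → ℝ)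
    (hσ : ∀ (i : Fin N) (u : Fin i.1 → Bool), σ i u = τ i.succ (Fin.cons false u))
    (y : Fin (N + 1) → ℝ)
    (hy : ¬ τ ⟨0, Nat.succ_pos N⟩ Fin.elim0 < y ⟨0, Nat.succ_pos N⟩) :
    onesTail τ y = ones σ (fun j => y j.succ) := by
  have hd := decs_cons τ σ hσ y hy
  unfold onesTail ones
  refine (Finset.card_bij (fun (j : Fin N) _ => j.succ) ?_ ?_ ?_).symm
  · intro j hj
    simp only [Finset.mem_filter, Finset.mem_univ, true_and] at hj
    simp only [Finset.mem_filter, Finset.mem_erase, Finset.mem_univ, true_and]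
    refine ⟨⟨?_, trivial⟩, ?_⟩
    · exact fun h => Fin.succ_ne_zero j (by rw [h]; rfl)
    · rw [hd, Fin.cons_succ, hj]
  · intro j₁ _ j₂ _ h
    exact Fin.succ_injective N h
  · intro i hi
    simp only [Finset.mem_filter, Finset.mem_erase, Finset.mem_univ, true_and] at hi
    obtain ⟨⟨hi0, _⟩, hit⟩ := hi
    have h0 : i ≠ 0 := fun h => hi0 (by rw [h]; rfl)
    obtain ⟨j, rfl⟩ := Fin.eq_succ_of_ne_zero h0
    refine ⟨j, ?_, rfl⟩
    simp only [Finset.mem_filter, Finset.mem_univ, true_and]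
    rw [hd, Fin.cons_succ] at hit
    exact hit

lemma decs_zero {N : ℕ} (τ : (i : Fin (N + 1)) → (Fin i.1 → Bool) → ℝ)
    (y : Fin (N + 1) → ℝ) :
    decs τ y ⟨0, Nat.succ_pos N⟩
      = decide (τ ⟨0, Nat.succ_pos N⟩ Fin.elim0 < y ⟨0, Nat.succ_pos N⟩) := by
  have key : ∀ (k : ℕ) (hk : k + 1 ≤ N + 1),
      decAux τ y (k + 1) hk ⟨0, Nat.succ_pos k⟩
        = decide (τ ⟨0, Nat.succ_pos N⟩ Fin.elim0 < y ⟨0, Nat.succ_pos N⟩) := by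
    intro k
    induction k with
    | zero =>
      intro hk
      rw [decAux_succ_eq, dif_neg (Nat.lt_irrefl 0)]
      have h0 : decAux τ y 0 (Nat.le_of_succ_le hk) = Fin.elim0 := Subsingleton.elim _ _
      rw [h0]
    | succ k ih =>
      intro hk
      rw [decAux_succ_eq, dif_pos (Nat.succ_pos k)]
      exact ih (Nat.le_of_succ_le hk)
  exact key N le_rfl

lemma pi_cons_measure {N : ℕ} (μ : Measure ℝ) [IsProbabilityMeasure μ] (t : ℝ)
    (A : Set (Fin N → ℝ)) (hA : MeasurableSet A) :
    (Measure.pi fun _ : Fin (N + 1) => μ)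
        {y | y ⟨0, Nat.succ_pos N⟩ ≤ t ∧ (fun j => y j.succ) ∈ A}
      = μ (Set.Iic t) * (Measure.pi fun _ : Fin N => μ) A := by
  have hmp := measurePreserving_piFinSuccAbove (fun _ : Fin (N + 1) => μ) 0
  have hset : {y : Fin (N + 1) → ℝ | y ⟨0, Nat.succ_pos N⟩ ≤ t ∧ (fun j => y j.succ) ∈ A}
      = (MeasurableEquiv.piFinSuccAbove (fun _ : Fin (N + 1) => ℝ) 0) ⁻¹' (Set.Iic t ×ˢ A) := by
    ext y
    simp only [Set.mem_setOf_eq, Set.mem_preimage, Set.mem_prod,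
      MeasurableEquiv.piFinSuccAbove_apply, Fin.zero_succAbove, Set.mem_Iic]
    exact Iff.rfl
  rw [hset, hmp.measure_preimage (measurableSet_Iic.prod hA).nullMeasurableSet, Measure.prod_prod]

/-- **Subproblem equivalence: `R₀` is an `N`-agent Bayes risk.**  In the
`(N+1)`-agent sequential model with the `L`-out-of-`(N+1)` fusion rule, fix a
sequential strategy `τ` with first threshold `τ₁`, and assume
`P(Ĥ₁ = 0) = p0(1 − a(τ₁)) + p1·b(τ₁) > 0`.  Let
`q0 = p0(1 − a(τ₁))/(p0(1 − a(τ₁)) + p1·b(τ₁)) = P(H=0 | Ĥ₁=0)`.  Then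
`c10·q0·P(Σ_{n=2}^{N+1} Ĥₙ ≥ L | H=0, Ĥ₁=0)
  + c01·(1−q0)·P(Σ_{n=2}^{N+1} Ĥₙ ≤ L−1 | H=1, Ĥ₁=0)`
equals the Bayes risk, in the `N`-agent sequential model with prior `q0`, costs
`c10, c01` and the `L`-out-of-`N` fusion rule, of the strategy
`σᵢ(u₁,…,u_{i−1}) = τ_{i+1}(0, u₁, …, u_{i−1})`. -/
theorem subproblem_B0_is_N_agent_bayes_risk
    (μ0 μ1 : Measure ℝ) [IsProbabilityMeasure μ0] [IsProbabilityMeasure μ1]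
    (p0 c10 c01 : ℝ) (hp0 : p0 ∈ Set.Ioo (0 : ℝ) 1) (hc10 : 0 < c10) (hc01 : 0 < c01)
    (N L : ℕ) (hL1 : 1 ≤ L) (hLN : L ≤ N + 1)
    (τ : (i : Fin (N + 1)) → (Fin i.1 → Bool) → ℝ)
    (a1 b1 q0 : ℝ)
    (ha1 : a1 = (μ0 (Set.Ioi (τ ⟨0, Nat.succ_pos N⟩ Fin.elim0))).toReal)
    (hb1 : b1 = (μ1 (Set.Iic (τ ⟨0, Nat.succ_pos N⟩ Fin.elim0))).toReal)
    (hpos : 0 < p0 * (1 - a1) + (1 - p0) * b1)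
    (hq0 : q0 = p0 * (1 - a1) / (p0 * (1 - a1) + (1 - p0) * b1))
    (σ : (i : Fin N) → (Fin i.1 → Bool) → ℝ)
    (hσ : ∀ (i : Fin N) (u : Fin i.1 → Bool), σ i u = τ i.succ (Fin.cons false u)) :
    c10 * q0 * condProb (Measure.pi fun _ : Fin (N + 1) => μ0)
        {y | L ≤ onesTail τ y}
        {y | decs τ y ⟨0, Nat.succ_pos N⟩ = false}
      + c01 * (1 - q0) * condProb (Measure.pi fun _ : Fin (N + 1) => μ1)
        {y | ((onesTail τ y : ℤ)) ≤ (L : ℤ) - 1}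
        {y | decs τ y ⟨0, Nat.succ_pos N⟩ = false}
    = seqRisk N q0 c10 c01 μ0 μ1 L σ := by
  set t := τ ⟨0, Nat.succ_pos N⟩ Fin.elim0 with ht
  -- pointwise characterization of the conditioning event
  have hTm : ∀ y : Fin (N + 1) → ℝ,
      decs τ y ⟨0, Nat.succ_pos N⟩ = false ↔ y ⟨0, Nat.succ_pos N⟩ ≤ t := by
    intro y
    rw [decs_zero τ y, decide_eq_false_iff_not, not_lt]
  -- on the conditioning event, onesTail equals ones of σ on the tail
  have key0 : ∀ y : Fin (N + 1) → ℝ, y ⟨0, Nat.succ_pos N⟩ ≤ t →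
      onesTail τ y = ones σ (fun j => y j.succ) :=
    fun y hy => onesTail_eq τ σ hσ y (not_lt.mpr hy)
  -- the N-agent sets
  set A0 : Set (Fin N → ℝ) := {z | L ≤ ones σ z} with hA0def
  set A1 : Set (Fin N → ℝ) := {z | ¬ L ≤ ones σ z} with hA1def
  have hA0 : MeasurableSet A0 := measurable_ones σ trivial
  have hA1 : MeasurableSet A1 := by
    have : A1 = A0ᶜ := by ext z; simp [hA0def, hA1def]
    rw [this]; exact hA0.compl
  -- set identities
  have hS0 : {y : Fin (N + 1) → ℝ | L ≤ onesTail τ y}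
        ∩ {y | decs τ y ⟨0, Nat.succ_pos N⟩ = false}
      = {y | y ⟨0, Nat.succ_pos N⟩ ≤ t ∧ (fun j => y j.succ) ∈ A0} := by
    ext y
    simp only [Set.mem_inter_iff, Set.mem_setOf_eq, hTm y, hA0def]
    constructor
    · rintro ⟨h1, h2⟩
      exact ⟨h2, by rw [← key0 y h2]; exact h1⟩
    · rintro ⟨h1, h2⟩
      exact ⟨by rw [key0 y h1]; exact h2, h1⟩
  have hS1 : {y : Fin (N + 1) → ℝ | ((onesTail τ y : ℤ)) ≤ (L : ℤ) - 1}
        ∩ {y | decs τ y ⟨0, Nat.succ_pos N⟩ = false}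
      = {y | y ⟨0, Nat.succ_pos N⟩ ≤ t ∧ (fun j => y j.succ) ∈ A1} := by
    ext y
    simp only [Set.mem_inter_iff, Set.mem_setOf_eq, hTm y, hA1def]
    constructor
    · rintro ⟨h1, h2⟩
      refine ⟨h2, ?_⟩
      rw [← key0 y h2]
      omega
    · rintro ⟨h1, h2⟩
      refine ⟨?_, h1⟩
      rw [← key0 y h1] at h2
      omega
  have hTset : ∀ (μ : Measure ℝ) [IsProbabilityMeasure μ],
      (Measure.pi fun _ : Fin (N + 1) => μ) {y | decs τ y ⟨0, Nat.succ_pos N⟩ = false}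
        = μ (Set.Iic t) := by
    intro μ hμ
    have : {y : Fin (N + 1) → ℝ | decs τ y ⟨0, Nat.succ_pos N⟩ = false}
        = {y | y ⟨0, Nat.succ_pos N⟩ ≤ t ∧ (fun j => y j.succ) ∈ (Set.univ : Set (Fin N → ℝ))} := by
      ext y
      simp only [Set.mem_setOf_eq, Set.mem_univ, and_true]
      exact hTm y
    rw [this, pi_cons_measure μ t Set.univ MeasurableSet.univ, measure_univ, mul_one]
  -- the two toReal facts
  have htr0 : (μ0 (Set.Iic t)).toReal = 1 - a1 := by
    have h1 : μ0 (Set.Iic t) = 1 - μ0 (Set.Ioi t) := by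
      rw [← Set.compl_Ioi]
      exact prob_compl_eq_one_sub measurableSet_Ioi
    rw [h1, ENNReal.toReal_sub_of_le prob_le_one ENNReal.one_ne_top, ENNReal.toReal_one, ha1]
  have htr1 : (μ1 (Set.Iic t)).toReal = b1 := hb1.symm
  -- measure values
  have hm0 : (Measure.pi fun _ : Fin (N + 1) => μ0)
      ({y | L ≤ onesTail τ y} ∩ {y | decs τ y ⟨0, Nat.succ_pos N⟩ = false})
      = μ0 (Set.Iic t) * (Measure.pi fun _ : Fin N => μ0) A0 := by
    rw [hS0]; exact pi_cons_measure μ0 t A0 hA0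
  have hm1 : (Measure.pi fun _ : Fin (N + 1) => μ1)
      ({y | ((onesTail τ y : ℤ)) ≤ (L : ℤ) - 1} ∩ {y | decs τ y ⟨0, Nat.succ_pos N⟩ = false})
      = μ1 (Set.Iic t) * (Measure.pi fun _ : Fin N => μ1) A1 := by
    rw [hS1]; exact pi_cons_measure μ1 t A1 hA1
  have hq1 : 1 - q0 = (1 - p0) * b1 / (p0 * (1 - a1) + (1 - p0) * b1) := by
    rw [hq0]
    field_simp
    ring
  have hrisk : seqRisk N q0 c10 c01 μ0 μ1 L σ
      = c10 * q0 * ((Measure.pi fun _ : Fin N => μ0) A0).toReal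
        + c01 * (1 - q0) * ((Measure.pi fun _ : Fin N => μ1) A1).toReal := rfl
  rw [hrisk]
  congr 1
  · -- first term
    rcases eq_or_ne (μ0 (Set.Iic t)) 0 with h0 | h0
    · have ha : 1 - a1 = 0 := by rw [← htr0, h0]; simp
      have hq : q0 = 0 := by rw [hq0, ha]; simp
      rw [hq]; ring
    · have hfin : μ0 (Set.Iic t) ≠ ⊤ := measure_ne_top _ _
      have hcp : condProb (Measure.pi fun _ : Fin (N + 1) => μ0)
          {y | L ≤ onesTail τ y} {y | decs τ y ⟨0, Nat.succ_pos N⟩ = false}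
          = ((Measure.pi fun _ : Fin N => μ0) A0).toReal := by
        rw [condProb, hm0, hTset μ0, ENNReal.toReal_mul]
        exact mul_div_cancel_left₀ _ (by simp [ENNReal.toReal_ne_zero, h0, hfin])
      rw [hcp]
  · -- second term
    rcases eq_or_ne (μ1 (Set.Iic t)) 0 with h1 | h1
    · have hb : b1 = 0 := by rw [hb1, h1]; simp
      have hq : 1 - q0 = 0 := by rw [hq1, hb]; simp
      rw [hq]; ring
    · have hfin : μ1 (Set.Iic t) ≠ ⊤ := measure_ne_top _ _
      have hcp : condProb (Measure.pi fun _ : Fin (N + 1) => μ1)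
          {y | ((onesTail τ y : ℤ)) ≤ (L : ℤ) - 1} {y | decs τ y ⟨0, Nat.succ_pos N⟩ = false}
          = ((Measure.pi fun _ : Fin N => μ1) A1).toReal := by
        rw [condProb, hm1, hTset μ1, ENNReal.toReal_mul]
        exact mul_div_cancel_left₀ _ (by simp [ENNReal.toReal_ne_zero, h1, hfin])
      rw [hcp]

end
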